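/- arXiv:0704.2478 — 7 statements merged into one kernel-verified Lean document; each statement's English description precedes it below -/
import Mathlib

section
/- After the birational symplectic change of variables x3 = x−z, y3 = y, z3 = z, w3 = w+y, the condition α4 = β4 makes the hyperplane {x3 = 0} invariant for the transformed system; equivalently, the vector field component d(x−z)/dt of the D6^(1) system, restricted to the locus x = z, equals (2/(t(t−1)))(x−z)·(polynomial) and in particular vanishes when x = z and α4 = β4. -/
/-- When `α4 = β4` (and the parameters `α3, β0, β1` are given by the relations (5)),
the locus `{x = z}` is invariant for the `D₆⁽¹⁾` system: the right-hand sides of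
`dx/dt` and `dz/dt` agree on `x = z`, i.e. `d(x-z)/dt` vanishes there. -/
theorem x_eq_z_invariant_of_alpha4_eq_beta4
    (t x y z w α0 α1 α2 α3 α4 β0 β1 β2 β3 β4 : ℂ)
    (hα3 : α3 = (1 - α0 - α1 - 2*α2 + 2*β2 + β3 - β4)/2)
    (hα4 : α4 = (1 - α0 - α1 - 2*α2 - 2*β2 - β3 + β4)/2)
    (hβ0 : β0 = (1 + α0 - α1 - 2*α2 - 2*β2 - β3 - β4)/2)
    (hβ1 : β1 = (1 - α0 + α1 + 2*α2 - 2*β2 - β3 - β4)/2)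
    (h44 : α4 = β4) (hxz : x = z) :
    (1/(t*(t-1))) *
      (2*y*(x-t)*(x-1)*x - (α0-1)*(x-1)*x - α3*(x-t)*x - α4*(x-t)*(x-1)
        + 2*(x-t)*z*((z-1)*w + β2))
      =
    (1/(t*(t-1))) *
      (2*w*(z-t)*(z-1)*z - (β0-1)*(z-1)*z - β3*(z-t)*z - β4*(z-t)*(z-1)
        + 2*(x-t)*y*z*(z-1)) := by
  subst hxz hα3 hα4 hβ0
  linear_combination (1/(t*(t-1))) * (2*t*x - x^2 - t) * h44
end

section
/- The composite translation operator T1 = π1 s5 s4 s3 s2 s1 s0 s2 s3 s4 s5 acts on the parameter vector by T1(α0,α1,α2,γ1,β2,β3,β4) = (α0,α1,α2,γ1,β2,β3−1,β4+1). -/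
/-- Parameter space `ℂ⁷` with coordinates `(α0,α1,α2,γ1,β2,β3,β4)`. -/
abbrev Par7 := ℂ × ℂ × ℂ × ℂ × ℂ × ℂ × ℂ

def S0p : Par7 → Par7 := fun p => match p with
  | (a0, a1, a2, g1, b2, b3, b4) => (-a0, a1, a2 + a0, g1, b2, b3, b4)
def S1p : Par7 → Par7 := fun p => match p with
  | (a0, a1, a2, g1, b2, b3, b4) => (a0, -a1, a2 + a1, g1, b2, b3, b4)
def S2p : Par7 → Par7 := fun p => match p with
  | (a0, a1, a2, g1, b2, b3, b4) => (a0 + a2, a1 + a2, -a2, g1 + a2, b2, b3, b4)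
def S3p : Par7 → Par7 := fun p => match p with
  | (a0, a1, a2, g1, b2, b3, b4) => (a0, a1, a2 + g1, -g1, b2 + g1, b3, b4)
def S4p : Par7 → Par7 := fun p => match p with
  | (a0, a1, a2, g1, b2, b3, b4) => (a0, a1, a2, g1 + b2, -b2, b3 + b2, b4 + b2)
def S5p : Par7 → Par7 := fun p => match p with
  | (a0, a1, a2, g1, b2, b3, b4) => (a0, a1, a2, g1, b2 + b3, -b3, b4)
def Pi1p : Par7 → Par7 := fun p => match p with
  | (a0, a1, a2, g1, b2, b3, b4) => (a1, a0, a2, g1, b2, b4, b3)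

/-- The translation operator `T₁ = π₁ s₅ s₄ s₃ s₂ s₁ s₀ s₂ s₃ s₄ s₅`
(the word is applied to a parameter vector with the leftmost factor acting first). -/
def T1p : Par7 → Par7 :=
  S5p ∘ S4p ∘ S3p ∘ S2p ∘ S0p ∘ S1p ∘ S2p ∘ S3p ∘ S4p ∘ S5p ∘ Pi1p

/-- `T₁` acts on the parameters, subject to the `D₆⁽¹⁾` normalization
`α0+α1+2α2+2γ1+2β2+β3+β4 = 1`, by the translation `(0,0,0,0,0,-1,1)`. -/
theorem T1_translation (a0 a1 a2 g1 b2 b3 b4 : ℂ)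
    (hrel : a0 + a1 + 2*a2 + 2*g1 + 2*b2 + b3 + b4 = 1) :
    T1p (a0, a1, a2, g1, b2, b3, b4) = (a0, a1, a2, g1, b2, b3 - 1, b4 + 1) := by
  simp only [T1p, Function.comp_apply, Pi1p, S5p, S4p, S3p, S2p, S1p, S0p, Prod.mk.injEq]
  refine ⟨by ring, by ring, by ring, by ring, by ring, ?_, ?_⟩
  · linear_combination -hrel
  · linear_combination hrel
end

section
/- The translation operators T2 = s4 s6 T1 s6 s4 and T3 = s6 T1 s6 (with T1 = π1 s5 s4 s3 s2 s1 s0 s2 s3 s4 s5) act on parameters by adding (0,0,0,1,−1,0,0) and (0,0,0,0,1,−1,−1) respectively to (α0,α1,α2,γ1,β2,β3,β4). -/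
def S6p : Par7 → Par7 := fun p => match p with
  | (a0, a1, a2, g1, b2, b3, b4) => (a0, a1, a2, g1, b2 + b4, b3, -b4)
/-- `T₂ = s₄ s₆ T₁ s₆ s₄`. -/
def T2p : Par7 → Par7 := S4p ∘ S6p ∘ T1p ∘ S6p ∘ S4p

/-- `T₃ = s₆ T₁ s₆`. -/
def T3p : Par7 → Par7 := S6p ∘ T1p ∘ S6p

/-- Subject to the `D₆⁽¹⁾` normalization `α0+α1+2α2+2γ1+2β2+β3+β4 = 1`,
the operators `T₂` and `T₃` act on the parameters by the translations
`(0,0,0,1,-1,0,0)` and `(0,0,0,0,1,-1,-1)` respectively. -/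
theorem T2_T3_translations (a0 a1 a2 g1 b2 b3 b4 : ℂ)
    (hrel : a0 + a1 + 2*a2 + 2*g1 + 2*b2 + b3 + b4 = 1) :
    T2p (a0, a1, a2, g1, b2, b3, b4) = (a0, a1, a2, g1 + 1, b2 - 1, b3, b4) ∧
    T3p (a0, a1, a2, g1, b2, b3, b4) = (a0, a1, a2, g1, b2 + 1, b3 - 1, b4 - 1) := by
  constructor <;>
  · simp only [T2p, T3p, T1p, S0p, S1p, S2p, S3p, S4p, S5p, S6p, Pi1p, Function.comp, Prod.mk.injEq]
    refine ⟨?_, ?_, ?_, ?_, ?_, ?_, ?_⟩ <;>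
      first | linear_combination hrel | linear_combination -hrel | ring
end

section
/- The transformations g1, g2, g3, g4 on (x,y,z,w;α1,α2,α3,α4), given by g1: z ↦ z+α1/w with (α1,α2,α4)↦(−α1,α2+α1,α4+α1); g2: w ↦ w−α2/z with (α1,α2)↦(α1+α2,−α2); g3: x ↦ x+α3/y with (α3,α4)↦(−α3,α4+α3); g4: y ↦ y−α4/(x−z), w ↦ w+α4/(x−z) with (α1,α3,α4)↦(α1+α4,α3+α4,−α4), satisfy the defining relations of the classical Weyl group of type A4 on the parameter space: each gi² = id, (g1g2)³ = (g3g4)³ = (g1g4)³ = id as parameter actions, and nonadjacent pairs commute (g1g3 = g3g1, g2g3 = g3g2, g2g4 = g4g2). -/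
/-- Parameter space `ℂ⁴` with coordinates `(α1,α2,α3,α4)`. -/
abbrev Par4 := ℂ × ℂ × ℂ × ℂ

/-- Parameter action of `g₁`. -/
def G1 : Par4 → Par4 := fun p => match p with
  | (a1, a2, a3, a4) => (-a1, a2 + a1, a3, a4 + a1)

/-- Parameter action of `g₂`. -/
def G2 : Par4 → Par4 := fun p => match p with
  | (a1, a2, a3, a4) => (a1 + a2, -a2, a3, a4)

/-- Parameter action of `g₃`. -/
def G3 : Par4 → Par4 := fun p => match p with
  | (a1, a2, a3, a4) => (a1, a2, -a3, a4 + a3)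

/-- Parameter action of `g₄`. -/
def G4 : Par4 → Par4 := fun p => match p with
  | (a1, a2, a3, a4) => (a1 + a4, a2, a3 + a4, -a4)

/-- The parameter actions of `g₁, g₂, g₃, g₄` satisfy the defining relations of
the classical Weyl group of type `A₄` (Dynkin diagram `α2—α1—α4—α3`):
each `gᵢ² = id`, braid relations `(g₁g₂)³ = (g₃g₄)³ = (g₁g₄)³ = id`, and
nonadjacent pairs commute. -/
theorem g_weyl_A4_relations :
    (G1 ∘ G1 = id) ∧ (G2 ∘ G2 = id) ∧ (G3 ∘ G3 = id) ∧ (G4 ∘ G4 = id) ∧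
    ((G1 ∘ G2) ∘ (G1 ∘ G2) ∘ (G1 ∘ G2) = id) ∧
    ((G3 ∘ G4) ∘ (G3 ∘ G4) ∘ (G3 ∘ G4) = id) ∧
    ((G1 ∘ G4) ∘ (G1 ∘ G4) ∘ (G1 ∘ G4) = id) ∧
    (G1 ∘ G3 = G3 ∘ G1) ∧ (G2 ∘ G3 = G3 ∘ G2) ∧ (G2 ∘ G4 = G4 ∘ G2) := by
  refine ⟨?_,?_,?_,?_,?_,?_,?_,?_,?_,?_⟩
  all_goals funext p
  all_goals obtain ⟨a1,a2,a3,a4⟩ := p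
  all_goals simp only [G1,G2,G3,G4,Function.comp,id,Prod.mk.injEq]
  all_goals and_intros
  all_goals first | trivial | ring
end

section
/- The degeneration substitution for Painlevé VI → V is symplectic: the change of variables (x,y) ↦ (X,Y) defined by x = X/(X−T) and y = −(X−T)((X−T)Y + A1)/T satisfies dy∧dx = dY∧dX on the open set {X ≠ T}, for any complex constants T ≠ 0 and A1. -/
/-- The degeneration substitution from Painlevé VI to Painlevé V,
`x = X/(X-T)`, `y = -(X-T)((X-T)Y + A1)/T`, is symplectic: the Jacobian
determinant of `(X,Y) ↦ (x,y)` equals `1` on `{X ≠ T}`, i.e. `dy∧dx = dY∧dX`. -/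
theorem degeneration_substitution_symplectic (T A1 X Y : ℂ)
    (hT : T ≠ 0) (hX : X ≠ T) :
    (deriv (fun X' => X'/(X' - T)) X) *
      (deriv (fun Y' => -((X - T)*((X - T)*Y' + A1))/T) Y)
    - (deriv (fun _Y' => X/(X - T)) Y) *
      (deriv (fun X' => -((X' - T)*((X' - T)*Y + A1))/T) X) = 1 := by
  have hXT : X - T ≠ 0 := sub_ne_zero.mpr hX
  have h1 : HasDerivAt (fun X' : ℂ => X'/(X' - T)) (-T/(X - T)^2) X := by
    have := ((hasDerivAt_id X).div ((hasDerivAt_id X).sub_const T) hXT)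
    refine this.congr_deriv ?_
    simp only [id]
    ring
  have h2 : HasDerivAt (fun Y' : ℂ => -((X - T)*((X - T)*Y' + A1))/T)
      (-((X - T)*(X - T))/T) Y := by
    have := ((((hasDerivAt_id Y).const_mul (X - T)).add_const A1).const_mul
      (X - T)).neg.div_const T
    refine this.congr_deriv ?_
    ring
  rw [h1.deriv, h2.deriv, deriv_const]
  field_simp
  ring
end

section
/- In the A5^(1) system, the composite S5 := s5 s4 s3 s2 s0 s2 s3 s4 s5 of the D6^(1) Bäcklund parameter actions acts on the parameters (A0,A1,A2,A3,A4,A5) := (α1, α2, α4−β4, β2, β4, 1−α1−α2−α4−β2) as the simple reflection in A5: S5(A0,…,A5) = (A0+A5, A1, A2, A3, A4+A5, −A5). -/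
/-- The composite `S₅ := s₅ s₄ s₃ s₂ s₀ s₂ s₃ s₄ s₅` of the `D₆⁽¹⁾` Bäcklund
parameter actions (the word is a palindrome, so the order of application is
immaterial). -/
def S5comp : Par7 → Par7 :=
  S5p ∘ S4p ∘ S3p ∘ S2p ∘ S0p ∘ S2p ∘ S3p ∘ S4p ∘ S5p

/-- In the `A₅⁽¹⁾` parameters
`(A0,A1,A2,A3,A4,A5) = (α1, α2, α4-β4, β2, β4, 1-α1-α2-α4-β2)` (note
`α4 = γ1 + β4`), and subject to the `D₆⁽¹⁾` normalization, the composite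
`S₅ = s₅s₄s₃s₂s₀s₂s₃s₄s₅` acts as the simple `A₅` reflection
`(A0,…,A5) ↦ (A0+A5, A1, A2, A3, A4+A5, -A5)`. -/
theorem S5comp_is_A5_reflection (a0 a1 a2 g1 b2 b3 b4 : ℂ)
    (hrel : a0 + a1 + 2*a2 + 2*g1 + 2*b2 + b3 + b4 = 1) :
    (let A5 : ℂ := 1 - a1 - a2 - (g1 + b4) - b2
     let q := S5comp (a0, a1, a2, g1, b2, b3, b4)
     -- q = (α0', α1', α2', γ1', β2', β3', β4'); read off the A-parameters:
     q.2.1 = a1 + A5 ∧                      -- A0' = A0 + A5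
     q.2.2.1 = a2 ∧                         -- A1' = A1
     q.2.2.2.1 = g1 ∧                       -- A2' = A2
     q.2.2.2.2.1 = b2 ∧                     -- A3' = A3
     q.2.2.2.2.2.2 = b4 + A5 ∧              -- A4' = A4 + A5
     1 - q.2.1 - q.2.2.1 - (q.2.2.2.1 + q.2.2.2.2.2.2) - q.2.2.2.2.1 = -A5) := by
  simp only [S5comp, S5p, S4p, S3p, S2p, S0p, Function.comp]
  exact ⟨by linear_combination hrel, by ring, by ring, by ring,
    by linear_combination hrel, by linear_combination (-2)*hrel⟩
end

section
/- For the Hamiltonian K = a1 x³y² + a2 x²y³ + a3 x²y² + a4 x²y + a5 xy² + a6 xy − (γ2 a5 + γ2² a2) y + (γ1 a4 − γ1² a1) x, the associated Hamiltonian vector field dx/dt = ∂K/∂y, dy/dt = −∂K/∂x remains polynomial in the coordinates (x2,y2) = (−(xy−γ2)y, 1/y): when rewritten in (x2,y2), both dx2/dt and dy2/dt are polynomials in x2, y2. -/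
/-- The degree-5 Hamiltonian `K` of Proposition 7.1. -/
noncomputable def Kham (a1 a2 a3 a4 a5 a6 γ1 γ2 x y : ℂ) : ℂ :=
  a1*x^3*y^2 + a2*x^2*y^3 + a3*x^2*y^2 + a4*x^2*y + a5*x*y^2 + a6*x*y
    - (γ2*a5 + γ2^2*a2)*y + (γ1*a4 - γ1^2*a1)*x

/-- Holomorphy of the Hamiltonian vector field of `K` in the blown-up coordinates
`(x₂,y₂) = (-(xy-γ2)y, 1/y)`: the components `dx₂/dt` and `dy₂/dt` of the vector
field `ẋ = ∂K/∂y, ẏ = -∂K/∂x`, pushed forward to the new chart, are polynomial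
functions of `(x₂,y₂)`. -/
theorem K_polynomial_in_blowup_chart (a1 a2 a3 a4 a5 a6 γ1 γ2 : ℂ) :
    ∃ P Q : MvPolynomial (Fin 2) ℂ, ∀ x y : ℂ, y ≠ 0 →
      -- dx₂/dt = (∂x₂/∂x)·(∂K/∂y) + (∂x₂/∂y)·(-∂K/∂x) is polynomial in (x₂,y₂):
      ((deriv (fun x' => -((x'*y - γ2)*y)) x) *
          (deriv (fun y' => Kham a1 a2 a3 a4 a5 a6 γ1 γ2 x y') y)
        + (deriv (fun y' => -((x*y' - γ2)*y')) y) *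
          (-(deriv (fun x' => Kham a1 a2 a3 a4 a5 a6 γ1 γ2 x' y) x))
        = MvPolynomial.eval ![-((x*y - γ2)*y), 1/y] P) ∧
      -- dy₂/dt = (∂y₂/∂y)·(-∂K/∂x) is polynomial in (x₂,y₂):
      ((deriv (fun y' => 1/y') y) *
          (-(deriv (fun x' => Kham a1 a2 a3 a4 a5 a6 γ1 γ2 x' y) x))
        = MvPolynomial.eval ![-((x*y - γ2)*y), 1/y] Q) := by
  classical
  refine ⟨
    MvPolynomial.C ((-1:ℂ)*a6) * MvPolynomial.X 0
      + MvPolynomial.C ((3:ℂ)*a4) * MvPolynomial.X 0^2 * MvPolynomial.X 1^2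
      + MvPolynomial.C ((-4:ℂ)*a4*γ2) * MvPolynomial.X 0 * MvPolynomial.X 1
      + MvPolynomial.C ((1:ℂ)*a4*γ2^2)
      + MvPolynomial.C ((-2:ℂ)*a4*γ1) * MvPolynomial.X 0 * MvPolynomial.X 1
      + MvPolynomial.C ((1:ℂ)*a4*γ1*γ2)
      + MvPolynomial.C ((2:ℂ)*a3) * MvPolynomial.X 0^2 * MvPolynomial.X 1
      + MvPolynomial.C ((-2:ℂ)*a3*γ2) * MvPolynomial.X 0
      + MvPolynomial.C ((1:ℂ)*a2) * MvPolynomial.X 0^2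
      + MvPolynomial.C ((-4:ℂ)*a1) * MvPolynomial.X 0^3 * MvPolynomial.X 1^3
      + MvPolynomial.C ((9:ℂ)*a1*γ2) * MvPolynomial.X 0^2 * MvPolynomial.X 1^2
      + MvPolynomial.C ((-6:ℂ)*a1*γ2^2) * MvPolynomial.X 0 * MvPolynomial.X 1
      + MvPolynomial.C ((1:ℂ)*a1*γ2^3)
      + MvPolynomial.C ((2:ℂ)*a1*γ1^2) * MvPolynomial.X 0 * MvPolynomial.X 1
      + MvPolynomial.C ((-1:ℂ)*a1*γ1^2*γ2),
    MvPolynomial.C ((1:ℂ)*a6) * MvPolynomial.X 1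
      + MvPolynomial.C ((1:ℂ)*a5)
      + MvPolynomial.C ((-2:ℂ)*a4) * MvPolynomial.X 0 * MvPolynomial.X 1^3
      + MvPolynomial.C ((2:ℂ)*a4*γ2) * MvPolynomial.X 1^2
      + MvPolynomial.C ((1:ℂ)*a4*γ1) * MvPolynomial.X 1^2
      + MvPolynomial.C ((-2:ℂ)*a3) * MvPolynomial.X 0 * MvPolynomial.X 1^2
      + MvPolynomial.C ((2:ℂ)*a3*γ2) * MvPolynomial.X 1
      + MvPolynomial.C ((-2:ℂ)*a2) * MvPolynomial.X 0 * MvPolynomial.X 1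
      + MvPolynomial.C ((2:ℂ)*a2*γ2)
      + MvPolynomial.C ((3:ℂ)*a1) * MvPolynomial.X 0^2 * MvPolynomial.X 1^4
      + MvPolynomial.C ((-6:ℂ)*a1*γ2) * MvPolynomial.X 0 * MvPolynomial.X 1^3
      + MvPolynomial.C ((3:ℂ)*a1*γ2^2) * MvPolynomial.X 1^2
      + MvPolynomial.C ((-1:ℂ)*a1*γ1^2) * MvPolynomial.X 1^2,
    fun x y hy => ?_⟩
  have hKy : HasDerivAt (fun y' : ℂ => Kham a1 a2 a3 a4 a5 a6 γ1 γ2 x y')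
      (2*a1*x^3*y + 3*a2*x^2*y^2 + 2*a3*x^2*y + a4*x^2 + 2*a5*x*y + a6*x
        - (γ2*a5 + γ2^2*a2)) y := by
    unfold Kham
    have h := (((((((hasDerivAt_pow 2 y).const_mul (a1*x^3)).add
      ((hasDerivAt_pow 3 y).const_mul (a2*x^2))).add
      ((hasDerivAt_pow 2 y).const_mul (a3*x^2))).add
      ((hasDerivAt_id y).const_mul (a4*x^2))).add
      ((hasDerivAt_pow 2 y).const_mul (a5*x))).add
      ((hasDerivAt_id y).const_mul (a6*x))).sub
      ((hasDerivAt_id y).const_mul (γ2*a5 + γ2^2*a2)) |>.add_const ((γ1*a4 - γ1^2*a1)*x)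
    refine h.congr_deriv ?_
    try simp only [id_eq]
    push_cast
    ring
  have hKx : HasDerivAt (fun x' : ℂ => Kham a1 a2 a3 a4 a5 a6 γ1 γ2 x' y)
      (3*a1*x^2*y^2 + 2*a2*x*y^3 + 2*a3*x*y^2 + 2*a4*x*y + a5*y^2 + a6*y
        + (γ1*a4 - γ1^2*a1)) x := by
    unfold Kham
    have h := (((((((((hasDerivAt_pow 3 x).const_mul a1).mul_const (y^2)).add
      ((((hasDerivAt_pow 2 x).const_mul a2).mul_const (y^3)))).add
      ((((hasDerivAt_pow 2 x).const_mul a3).mul_const (y^2)))).add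
      ((((hasDerivAt_pow 2 x).const_mul a4).mul_const y))).add
      ((((hasDerivAt_id x).const_mul a5).mul_const (y^2)))).add
      ((((hasDerivAt_id x).const_mul a6).mul_const y))).sub_const
      ((γ2*a5 + γ2^2*a2)*y)).add
      ((hasDerivAt_id x).const_mul (γ1*a4 - γ1^2*a1))
    refine h.congr_deriv ?_
    try simp only [id_eq]
    push_cast
    ring
  have hA : HasDerivAt (fun x' : ℂ => -((x'*y - γ2)*y)) (-(y*y)) x := by
    have h := ((((hasDerivAt_id x).mul_const y).sub_const γ2).mul_const y).neg
    refine h.congr_deriv ?_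
    try simp only [id_eq]
    ring
  have hB : HasDerivAt (fun y' : ℂ => -((x*y' - γ2)*y')) (-(x*y + (x*y - γ2))) y := by
    have h := ((((hasDerivAt_id y).const_mul x).sub_const γ2).mul (hasDerivAt_id y)).neg
    refine h.congr_deriv ?_
    try simp only [id_eq]
    ring
  have hC : HasDerivAt (fun y' : ℂ => 1/y') (-(1/y*(1/y))) y := by
    have h : HasDerivAt (fun y' : ℂ => 1/y') (-(y^2)⁻¹) y := by
      simpa only [one_div] using hasDerivAt_inv hy
    convert h using 1
    rw [one_div, ← mul_inv, ← sq]
  rw [hKy.deriv, hKx.deriv, hA.deriv, hB.deriv, hC.deriv]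
  simp only [MvPolynomial.eval_add, MvPolynomial.eval_mul, MvPolynomial.eval_pow,
    MvPolynomial.eval_C, MvPolynomial.eval_X, Matrix.cons_val_zero, Matrix.cons_val_one,
    Matrix.head_cons]
  set v := 1/y with hvdef
  have hyv : y * v = 1 := by
    rw [hvdef]
    field_simp
  constructor
  · linear_combination ((-3)*a4*x^2*y^2 + (-3)*a4*x^2*y^3*v + 2*a4*γ2*x*y + 6*a4*γ2*x*y^2*v + 1*a4*γ2^2 + (-3)*a4*γ2^2*y*v + (-2)*a4*γ1*x*y + 2*a4*γ1*γ2 + (-2)*a3*x^2*y^3 + 4*a3*γ2*x*y^2 + (-2)*a3*γ2^2*y + (-4)*a1*x^3*y^3 + (-4)*a1*x^3*y^4*v + (-4)*a1*x^3*y^5*v^2 + 3*a1*γ2*x^2*y^2 + 3*a1*γ2*x^2*y^3*v + 12*a1*γ2*x^2*y^4*v^2 + 6*a1*γ2^2*x*y^2*v + (-12)*a1*γ2^2*x*y^3*v^2 + 1*a1*γ2^3 + (-5)*a1*γ2^3*y*v + 4*a1*γ2^3*y^2*v^2 + 2*a1*γ1^2*x*y + (-2)*a1*γ1^2*γ2)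 * hyv
  · linear_combination (1*a6*v + 1*a5 + 1*a5*y*v + (-2)*a4*x*y*v^2 + 2*a4*γ2*v^2 + 2*a3*γ2*v + 2*a2*x*y^2*v + 2*a2*γ2 + (-3)*a1*x^2*y^2*v^2 + (-3)*a1*x^2*y^3*v^3 + 6*a1*γ2*x*y^2*v^3 + 3*a1*γ2^2*v^2 + (-3)*a1*γ2^2*y*v^3) * hyv
end
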